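/- Let q = p^e with p prime, 0 ≤ k < e, and let R = F_q^N be the product ring with componentwise operations. Let C ⊆ R^n be an R-submodule, and for each S ∈ {1,…,N} let C_S = π_S(C) where π_S : R^n → F_q^n takes the S-th component in every coordinate. Then C is k-Galois self-dual over R (i.e. C = C^{⊥k,R}) if and only if for every S, the linear code C_S ⊆ F_q^n is k-Galois self-dual (i.e. C_S = (C_S)^{⊥k}). -/
import Mathlib


/-- The `k`-Galois dual (as a set) of a set of codewords `C ⊆ R^ι`,
with respect to the inner product `⟨u,v⟩ = ∑ i, u i * (v i)^pk`. -/
def galoisDualSet {R : Type*} [CommRing R] {ι : Type*} [Fintype ι]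
    (pk : ℕ) (C : Set (ι → R)) : Set (ι → R) :=
  {v | ∀ c ∈ C, ∑ i, c i * v i ^ pk = 0}

theorem stmt10 {p e k N n : ℕ} (hp : p.Prime) (he : 0 < e) (hk : k < e)
    {F : Type*} [Field F] [Fintype F] (hcard : Fintype.card F = p ^ e)
    (C : Submodule (Fin N → F) (Fin n → Fin N → F)) :
    (C : Set (Fin n → Fin N → F)) =
        galoisDualSet (p ^ k) (C : Set (Fin n → Fin N → F)) ↔
      ∀ S : Fin N,
        (fun ρ : Fin n → Fin N → F => fun i => ρ i S) ''
            (C : Set (Fin n → Fin N → F)) =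
          galoisDualSet (p ^ k)
            ((fun ρ : Fin n → Fin N → F => fun i => ρ i S) ''
              (C : Set (Fin n → Fin N → F))) := by
  have hpk : p ^ k ≠ 0 := pow_ne_zero _ hp.pos.ne'
  set π : Fin N → (Fin n → Fin N → F) → (Fin n → F) :=
    fun S ρ i => ρ i S with hπ
  -- componentwise characterization of dual membership over R
  have hdual : ∀ v : Fin n → Fin N → F,
      v ∈ galoisDualSet (p ^ k) (C : Set (Fin n → Fin N → F)) ↔
      ∀ S : Fin N, π S v ∈ galoisDualSet (p ^ k) (π S '' (C : Set _)) := by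
    intro v
    constructor
    · intro h S u hu
      obtain ⟨c, hc, rfl⟩ := hu
      have h2 := congrFun (h c hc) S
      simpa [Finset.sum_apply] using h2
    · intro h c hc
      funext S
      have := h S (π S c) ⟨c, hc, rfl⟩
      simpa [Finset.sum_apply] using this
  -- reconstruction: if each projection lies in the projection of C, then v ∈ C
  have hmem : ∀ v : Fin n → Fin N → F,
      (∀ S, π S v ∈ π S '' (C : Set _)) → v ∈ C := by
    intro v h
    choose c hc hceq using h
    have hv : v = ∑ S : Fin N, (Pi.single S (1 : F) : Fin N → F) • c S := by
      funext i T
      have : (∑ S : Fin N, (Pi.single S (1 : F) : Fin N → F) • c S) i T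
          = ∑ S : Fin N, ((Pi.single S (1 : F) : Fin N → F) T) * c S i T := by
        simp [Finset.sum_apply]
      rw [this]
      have h1 : ∑ S : Fin N, ((Pi.single S (1 : F) : Fin N → F) T) * c S i T = c T i T := by
        simp [Pi.single_apply]
      rw [h1]
      exact (congrFun (hceq T) i).symm
    rw [hv]
    exact Submodule.sum_mem _ fun S _ => Submodule.smul_mem _ _ (hc S)
  constructor
  · intro hC S
    ext u
    constructor
    · rintro ⟨c, hc, rfl⟩
      have hcd : c ∈ galoisDualSet (p ^ k) (C : Set _) := hC ▸ hc
      exact (hdual c).1 hcd S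
    · intro hu
      set ρ : Fin n → Fin N → F := fun i T => if T = S then u i else 0 with hρ
      have hρd : ρ ∈ galoisDualSet (p ^ k) (C : Set _) := by
        rw [hdual]
        intro T
        by_cases hTS : T = S
        · subst hTS
          have : π T ρ = u := by funext i; simp [hρ, π]
          rw [this]; exact hu
        · have : π T ρ = 0 := by funext i; simp [hρ, π, hTS]
          rw [this]
          intro c hc
          simp [zero_pow hpk]
      have hρC : ρ ∈ C := by rw [← SetLike.mem_coe, hC]; exact hρd
      exact ⟨ρ, hρC, by funext i; simp [hρ, π]⟩
  · intro h
    ext v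
    constructor
    · intro hv
      rw [hdual]
      intro S
      simp only [hπ]
      rw [← h S]
      exact ⟨v, hv, rfl⟩
    · intro hv
      apply hmem
      intro S
      simp only [hπ]
      rw [h S]
      exact (hdual v).1 hv S
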